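/- Let E be a meet-semilattice with bottom ⊥, X ⊆ E × Finset E, B a generalized Boolean algebra, and φ : E → B an X-to-join representation. For every map α : B → Bool that is not identically false and preserves ⊥, binary meets and binary joins, the composite α ∘ φ is an X-to-join character of E (in particular it is not identically false). Moreover, the map Γ sending α to α ∘ φ is continuous from the set of such maps α (as a subspace of B → Bool with the product topology) to \hat{E}_X. (This is the key step in the proof of Theorem 3.3.) -/

import Mathlib

/-- The set of `X`-to-join characters of a meet-semilattice `E` with bottom. -/
def XtoJoinChars {E : Type*} [SemilatticeInf E] [OrderBot E]
    (X : Set (E × Finset E)) : Set (E → Bool) :=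
  {φ | φ ⊥ = false ∧ (∀ x y : E, φ (x ⊓ y) = (φ x && φ y)) ∧ (∃ x : E, φ x = true) ∧
    ∀ p ∈ X, (φ p.1 = true ↔ ∃ f ∈ p.2, φ f = true)}

/-- The maps `α : B → Bool` that are not identically false and preserve `⊥`, binary meets
and binary joins. -/
def GoodChars (B : Type*) [GeneralizedBooleanAlgebra B] : Set (B → Bool) :=
  {α | (∃ b : B, α b = true) ∧ α ⊥ = false ∧
    (∀ a b : B, α (a ⊓ b) = (α a && α b)) ∧ (∀ a b : B, α (a ⊔ b) = (α a || α b))}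

private lemma sup_char {E B : Type*} [GeneralizedBooleanAlgebra B]
    (α : B → Bool) (hb : α ⊥ = false) (hsup : ∀ a b : B, α (a ⊔ b) = (α a || α b))
    (φ : E → B) (s : Finset E) :
    (α (s.sup φ) = true ↔ ∃ f ∈ s, α (φ f) = true) := by
  classical
  induction s using Finset.induction_on with
  | empty => simp [hb]
  | insert h ih =>
    rename_i a s
    simp [Finset.sup_insert, hsup, s]

theorem statement7 {E B : Type*} [SemilatticeInf E] [OrderBot E]
    [GeneralizedBooleanAlgebra B]
    (X : Set (E × Finset E)) (φ : E → B)
    (hbot : φ ⊥ = ⊥)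
    (hinf : ∀ x y : E, φ (x ⊓ y) = φ x ⊓ φ y)
    (hproper : ∀ b : B, ∃ s : Finset E, b ≤ s.sup φ)
    (hX : ∀ p ∈ X, φ p.1 = p.2.sup φ) :
    ∃ h : ∀ α : GoodChars B, (fun e : E => (α : B → Bool) (φ e)) ∈ XtoJoinChars X,
      Continuous fun α : GoodChars B =>
        (⟨fun e : E => (α : B → Bool) (φ e), h α⟩ : XtoJoinChars X) := by
  have key : ∀ α : GoodChars B, (fun e : E => (α : B → Bool) (φ e)) ∈ XtoJoinChars X := by
    rintro ⟨α, ⟨b, hb⟩, hab, hainf, hasup⟩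
    have mono : ∀ x y : B, x ≤ y → α x = true → α y = true := by
      intro x y hxy hx
      have : α (x ⊔ y) = (α x || α y) := hasup x y
      rw [sup_eq_right.2 hxy] at this
      rw [this, hx, Bool.true_or]
    refine ⟨by simp [hbot, hab], fun x y => by simp [hinf, hainf], ?_, ?_⟩
    · obtain ⟨s, hs⟩ := hproper b
      have : α (s.sup φ) = true := mono _ _ hs hb
      obtain ⟨f, _, hf⟩ := (sup_char α hab hasup φ s).1 this
      exact ⟨f, hf⟩
    · intro p hp
      simp only [hX p hp]
      exact sup_char α hab hasup φ p.2
  refine ⟨key, ?_⟩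
  apply Continuous.subtype_mk
  apply continuous_pi
  intro e
  exact (continuous_apply (φ e)).comp continuous_subtype_val
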